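/- Let M and N be idempotent linearly ordered monoids with identities denoted e. Then there exist an idempotent linearly ordered monoid P and embeddings f : M → P and g : N → P such that: every element of P lies in the range of f or the range of g; the ranges of f and g intersect exactly in {e}; for every m ∈ M with m ≠ e and every n ∈ N, f(m)·g(n) = g(n)·f(m) = f(m); and for every m ∈ M with m ≠ e and every n ∈ N, if m < e then f(m) < g(n), and if e < m then g(n) < f(m). (P is the nested sum M ⊞ N, and it is an idempotent linearly ordered monoid into which M and N embed.) -/

import Mathlib

universe u

/-- A linearly ordered monoid: a monoid with a linear order in which
multiplication is monotone in each argument. -/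
structure LOM : Type (u + 1) where
  carrier : Type u
  mul : carrier → carrier → carrier
  one : carrier
  le : carrier → carrier → Prop
  mul_assoc : ∀ a b c, mul (mul a b) c = mul a (mul b c)
  one_mul : ∀ a, mul one a = a
  mul_one : ∀ a, mul a one = a
  le_refl : ∀ a, le a a
  le_trans : ∀ a b c, le a b → le b c → le a c
  le_antisymm : ∀ a b, le a b → le b a → a = b
  le_total : ∀ a b, le a b ∨ le b a
  mono : ∀ a b c d, le a b → le (mul (mul c a) d) (mul (mul c b) d)

/-- A linearly ordered monoid is idempotent if every element is idempotent. -/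
def LOM.Idem (A : LOM) : Prop := ∀ a, A.mul a a = a

/-- A homomorphism of linearly ordered monoids: an order-preserving monoid
homomorphism. -/
def LOM.IsHom (A B : LOM) (f : A.carrier → B.carrier) : Prop :=
  (∀ a b, f (A.mul a b) = B.mul (f a) (f b)) ∧ f A.one = B.one ∧
    ∀ a b, A.le a b → B.le (f a) (f b)

/-- An embedding of linearly ordered monoids: an injective homomorphism. -/
def LOM.IsEmb (A B : LOM) (f : A.carrier → B.carrier) : Prop :=
  LOM.IsHom A B f ∧ Function.Injective f

namespace NS

lemma mul_ne_one (A : LOM.{u}) (hA : A.Idem) {a : A.carrier} (b : A.carrier)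
    (ha : a ≠ A.one) : A.mul a b ≠ A.one := by
  intro h
  apply ha
  have : a = A.mul a (A.mul a b) := by rw [h, A.mul_one]
  rw [this, ← A.mul_assoc, hA, h]

lemma mul_ne_one' (A : LOM.{u}) (hA : A.Idem) (a : A.carrier) {b : A.carrier}
    (hb : b ≠ A.one) : A.mul a b ≠ A.one := by
  intro h
  apply hb
  have : b = A.mul (A.mul a b) b := by rw [h, A.one_mul]
  rw [this, A.mul_assoc, hA, h]

variable (M N : LOM.{u})

abbrev Car := {m : M.carrier // m ≠ M.one} ⊕ N.carrier

variable (hM : M.Idem) (hN : N.Idem)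

def pmul : Car M N → Car M N → Car M N
  | .inl a, .inl b => .inl ⟨M.mul a.1 b.1, mul_ne_one M hM b.1 a.2⟩
  | .inl a, .inr _ => .inl a
  | .inr _, .inl b => .inl b
  | .inr n, .inr n' => .inr (N.mul n n')

def ple : Car M N → Car M N → Prop
  | .inl a, .inl b => M.le a.1 b.1
  | .inl a, .inr _ => M.le a.1 M.one
  | .inr _, .inl b => M.le M.one b.1
  | .inr n, .inr n' => N.le n n'

-- helper: one-sided monotonicity
lemma mono_left (A : LOM.{u}) {a b : A.carrier} (c : A.carrier) (h : A.le a b) :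
    A.le (A.mul c a) (A.mul c b) := by
  have := A.mono a b c A.one h
  rwa [A.mul_one, A.mul_one] at this

lemma mono_right (A : LOM.{u}) {a b : A.carrier} (d : A.carrier) (h : A.le a b) :
    A.le (A.mul a d) (A.mul b d) := by
  have := A.mono a b A.one d h
  rwa [A.one_mul, A.one_mul] at this

def P : LOM.{u} where
  carrier := Car M N
  mul := pmul M N hM
  one := .inr N.one
  le := ple M N
  mul_assoc := by
    rintro (a | a) (b | b) (c | c) <;>
      simp [pmul, M.mul_assoc, N.mul_assoc]
  one_mul := by
    rintro (a | a) <;> simp [pmul, N.one_mul]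
  mul_one := by
    rintro (a | a) <;> simp [pmul, N.mul_one]
  le_refl := by
    rintro (a | a) <;> simp [ple, M.le_refl, N.le_refl]
  le_trans := by
    rintro (a | a) (b | b) (c | c) hab hbc <;> simp [ple] at *
    · exact M.le_trans _ _ _ hab hbc
    · exact M.le_trans _ _ _ hab hbc
    · exact M.le_trans _ _ _ hab hbc
    · exact hab
    · exact M.le_trans _ _ _ hab hbc
    · exact absurd (M.le_antisymm _ _ hbc hab) b.2
    · exact hbc
    · exact N.le_trans _ _ _ hab hbc
  le_antisymm := by
    rintro (a | a) (b | b) hab hba <;> simp [ple] at *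
    · exact Subtype.ext (M.le_antisymm _ _ hab hba)
    · exact absurd (M.le_antisymm _ _ hab hba) a.2
    · exact absurd (M.le_antisymm _ _ hba hab) b.2
    · exact N.le_antisymm _ _ hab hba
  le_total := by
    rintro (a | a) (b | b) <;> simp [ple]
    · exact M.le_total _ _
    · exact M.le_total _ _
    · exact (M.le_total _ _).symm
    · exact N.le_total _ _
  mono := by
    rintro (a | a) (b | b) (c | c) (d | d) h <;> simp [ple, pmul] at *
    -- a=L b=L
    · exact M.mono _ _ _ _ h
    · exact mono_left M _ h
    · exact mono_right M _ h
    · exact h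
    -- a=L b=R, h : a ≤ 1
    · have := M.mono a.1 M.one c.1 d.1 h
      rwa [M.mul_one] at this
    · have := mono_left M c.1 h
      rwa [M.mul_one] at this
    · have := mono_right M d.1 h
      rwa [M.one_mul] at this
    · exact h
    -- a=R b=L, h : 1 ≤ b
    · have := M.mono M.one b.1 c.1 d.1 h
      rwa [M.mul_one] at this
    · have := mono_left M c.1 h
      rwa [M.mul_one] at this
    · have := mono_right M d.1 h
      rwa [M.one_mul] at this
    · exact h
    -- a=R b=R
    · exact M.le_refl _
    · exact M.le_refl _
    · exact M.le_refl _
    · exact N.mono _ _ _ _ h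


open Classical in
noncomputable def f : M.carrier → Car M N := fun m =>
  if h : m = M.one then .inr N.one else .inl ⟨m, h⟩

lemma f_one : f M N M.one = .inr N.one := by unfold f; rw [dif_pos rfl]

lemma f_ne {m : M.carrier} (h : m ≠ M.one) : f M N m = .inl ⟨m, h⟩ := by
  unfold f; rw [dif_neg h]

theorem stmt_6' (hM : M.Idem) (hN : N.Idem) :
    ∃ (P : LOM.{u}) (f : M.carrier → P.carrier) (g : N.carrier → P.carrier),
      P.Idem ∧ LOM.IsEmb M P f ∧ LOM.IsEmb N P g ∧
      (∀ p : P.carrier, (∃ m, f m = p) ∨ (∃ n, g n = p)) ∧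
      (Set.range f ∩ Set.range g = {P.one}) ∧
      (∀ m : M.carrier, m ≠ M.one → ∀ n : N.carrier,
        P.mul (f m) (g n) = f m ∧ P.mul (g n) (f m) = f m) ∧
      (∀ m : M.carrier, m ≠ M.one → ∀ n : N.carrier,
        (M.le m M.one → P.le (f m) (g n) ∧ f m ≠ g n) ∧
        (M.le M.one m → P.le (g n) (f m) ∧ g n ≠ f m)) := by
  refine ⟨P M N hM, f M N, Sum.inr, ?_, ⟨⟨?_, ?_, ?_⟩, ?_⟩, ⟨⟨?_, ?_, ?_⟩, ?_⟩,
    ?_, ?_, ?_, ?_⟩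
  · -- Idem
    rintro (a | a) <;> simp [P, pmul]
    · exact Subtype.ext (hM a.1)
    · exact hN a
  · -- f mult
    intro a b
    by_cases ha : a = M.one <;> by_cases hb : b = M.one
    · subst ha; subst hb
      simp [f_one, M.one_mul, P, pmul, N.one_mul]
    · subst ha
      rw [M.one_mul, f_one, f_ne M N hb]
      simp [P, pmul]
    · subst hb
      rw [M.mul_one, f_one, f_ne M N ha]
      simp [P, pmul]
    · rw [f_ne M N ha, f_ne M N hb, f_ne M N (mul_ne_one M hM b ha)]
      simp [P, pmul]
  · -- f one
    exact f_one M N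
  · -- f mono
    intro a b hab
    by_cases ha : a = M.one <;> by_cases hb : b = M.one
    · subst ha; subst hb; rw [f_one]; exact N.le_refl _
    · subst ha; rw [f_one, f_ne M N hb]
      simpa [P, ple] using hab
    · subst hb; rw [f_one, f_ne M N ha]
      simpa [P, ple] using hab
    · rw [f_ne M N ha, f_ne M N hb]
      simpa [P, ple] using hab
  · -- f injective
    intro a b hab
    by_cases ha : a = M.one <;> by_cases hb : b = M.one
    · rw [ha, hb]
    · rw [ha, f_one, f_ne M N hb] at hab
      exact absurd hab (by simp)
    · rw [hb, f_one, f_ne M N ha] at hab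
      exact absurd hab (by simp)
    · rw [f_ne M N ha, f_ne M N hb] at hab
      exact congrArg Subtype.val (Sum.inl.inj hab)
  · -- g mult
    intro a b; simp [P, pmul]
  · rfl
  · intro a b hab; simpa [P, ple] using hab
  · exact fun a b h => Sum.inr.inj h
  · -- coverage
    rintro (a | a)
    · exact .inl ⟨a.1, f_ne M N a.2⟩
    · exact .inr ⟨a, rfl⟩
  · -- ranges intersect in one
    ext p
    simp only [Set.mem_inter_iff, Set.mem_range, Set.mem_singleton_iff]
    constructor
    · rintro ⟨⟨m, hm⟩, ⟨n, hn⟩⟩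
      by_cases h : m = M.one
      · subst h; rw [f_one] at hm; exact hm.symm
      · rw [f_ne M N h] at hm
        rw [← hm] at hn; exact absurd hn (by simp)
    · rintro rfl
      exact ⟨⟨M.one, f_one M N⟩, ⟨N.one, rfl⟩⟩
  · -- absorption
    intro m hm n
    rw [f_ne M N hm]
    exact ⟨rfl, rfl⟩
  · -- order separation
    intro m hm n
    rw [f_ne M N hm]
    exact ⟨fun h => ⟨by simpa [P, ple] using h, Sum.inl_ne_inr⟩,
      fun h => ⟨by simpa [P, ple] using h, Sum.inr_ne_inl⟩⟩

end NS

/-- The nested sum: for idempotent linearly ordered monoids `M` and `N` there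
is an idempotent linearly ordered monoid `P` into which both embed, whose
elements are covered by the two ranges, the ranges meeting exactly in the
identity, such that non-identity elements of `M` absorb all elements of `N`,
and negative (resp. positive) non-identity elements of `M` lie below
(resp. above) all elements of `N`. -/
theorem stmt_6 (M N : LOM.{u}) (hM : M.Idem) (hN : N.Idem) :
    ∃ (P : LOM.{u}) (f : M.carrier → P.carrier) (g : N.carrier → P.carrier),
      P.Idem ∧ LOM.IsEmb M P f ∧ LOM.IsEmb N P g ∧
      (∀ p : P.carrier, (∃ m, f m = p) ∨ (∃ n, g n = p)) ∧
      (Set.range f ∩ Set.range g = {P.one}) ∧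
      (∀ m : M.carrier, m ≠ M.one → ∀ n : N.carrier,
        P.mul (f m) (g n) = f m ∧ P.mul (g n) (f m) = f m) ∧
      (∀ m : M.carrier, m ≠ M.one → ∀ n : N.carrier,
        (M.le m M.one → P.le (f m) (g n) ∧ f m ≠ g n) ∧
        (M.le M.one m → P.le (g n) (f m) ∧ g n ≠ f m)) :=
  NS.stmt_6' M N hM hN
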